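/- arXiv:2405.12576 — 2 statements merged into one kernel-verified Lean document; each statement's English description precedes it below -/
import Mathlib

section
/- Let n ≥ 1 and 0 < α < (n+1)/2. For every k > 0 and every [z,t] ∈ ℍₙ, the integral ∫_{ℍₙ} ((k + ¼|w−z|²)² + (s − t + ½ Im(w·z̄))²)^{−(n+1−α)} dH_{2n+1}[w,s] is finite, and by translation invariance it equals ∫_{ℍₙ} ((k + ¼|w|²)² + s²)^{−(n+1−α)} dH_{2n+1}[w,s]. -/
open MeasureTheory Complex

noncomputable section

/-- Twisted imaginary part Im(z·w̄) on ℂⁿ. -/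
def hIm {n : ℕ} (z w : Fin n → ℂ) : ℝ := ∑ i, (z i * (starRingEnd ℂ) (w i)).im

/-- Squared Euclidean norm |z|² on ℂⁿ. -/
def nsq {n : ℕ} (z : Fin n → ℂ) : ℝ := ∑ i, ‖z i‖ ^ 2

/-- Folland–Kaplan gauge distance on ℍₙ = ℂⁿ × ℝ: d([z,t],[w,s]) = d([z,t]·[w,s]⁻¹),
    i.e. d([z,t],[w,s])⁴ = (1/16)|z−w|⁴ + (t−s+½Im(z·w̄))². -/
def hGauge {n : ℕ} (x y : (Fin n → ℂ) × ℝ) : ℝ :=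
  ((1 / 16) * nsq (x.1 - y.1) ^ 2 + (x.2 - y.2 + (1 / 2) * hIm x.1 y.1) ^ 2) ^ ((1 : ℝ) / 4)

lemma nsq_nonneg {n : ℕ} (w : Fin n → ℂ) : 0 ≤ nsq w :=
  Finset.sum_nonneg fun i _ => sq_nonneg _

lemma norm_sq_le_nsq {n : ℕ} (w : Fin n → ℂ) : ‖w‖ ^ 2 ≤ nsq w := by
  have h : ‖w‖ ≤ Real.sqrt (nsq w) := by
    rw [pi_norm_le_iff_of_nonneg (Real.sqrt_nonneg _)]
    intro j
    rw [← Real.sqrt_sq (norm_nonneg (w j))]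
    apply Real.sqrt_le_sqrt
    have := Finset.single_le_sum (f := fun i => ‖w i‖ ^ 2)
      (fun i _ => sq_nonneg _) (Finset.mem_univ j)
    simpa [nsq] using this
  calc ‖w‖ ^ 2 ≤ Real.sqrt (nsq w) ^ 2 := pow_le_pow_left₀ (norm_nonneg _) h 2
    _ = nsq w := Real.sq_sqrt (nsq_nonneg w)

lemma continuous_nsq {n : ℕ} : Continuous fun w : Fin n → ℂ => nsq w :=
  continuous_finset_sum _ fun i _ => (continuous_norm.comp (continuous_apply i)).pow 2

lemma oneD (p : ℝ) (hp : 1 < p) {a : ℝ} (ha : 0 < a) :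
    Integrable (fun s : ℝ => (a ^ 2 + s ^ 2) ^ (-p)) ∧
    (∫ s : ℝ, (a ^ 2 + s ^ 2) ^ (-p)) = a ^ (1 - 2 * p) * ∫ u : ℝ, ((1 : ℝ) + u ^ 2) ^ (-p) := by
  have hJ : Integrable (fun u : ℝ => ((1 : ℝ) + u ^ 2) ^ (-p)) := by
    refine integrable_inv_one_add_sq.mono ?_ (Filter.Eventually.of_forall fun u => ?_)
    · exact ((continuous_const.add (continuous_pow 2)).rpow_const
        (fun u => Or.inl (by show (1:ℝ) + u ^ 2 ≠ 0; positivity))).aestronglyMeasurable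
    · rw [Real.norm_of_nonneg (Real.rpow_nonneg (by positivity) _),
        Real.norm_of_nonneg (by positivity), ← Real.rpow_neg_one]
      exact Real.rpow_le_rpow_of_exponent_le (by nlinarith) (by linarith)
  have key : ∀ s : ℝ, (a ^ 2 + s ^ 2) ^ (-p)
      = a ^ (-(2 * p)) * ((1 : ℝ) + (a⁻¹ * s) ^ 2) ^ (-p) := by
    intro s
    have h1 : a ^ 2 + s ^ 2 = a ^ 2 * (1 + (a⁻¹ * s) ^ 2) := by
      field_simp
    rw [h1, Real.mul_rpow (by positivity) (by positivity), ← Real.rpow_natCast a 2,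
      ← Real.rpow_mul ha.le]
    norm_num
  constructor
  · exact ((hJ.comp_mul_left' (inv_ne_zero ha.ne')).const_mul (a ^ (-(2 * p)))).congr
      (Filter.Eventually.of_forall fun s => (key s).symm)
  · calc (∫ s : ℝ, (a ^ 2 + s ^ 2) ^ (-p))
        = ∫ s : ℝ, a ^ (-(2 * p)) * ((1 : ℝ) + (a⁻¹ * s) ^ 2) ^ (-p) := by
          exact integral_congr_ae (Filter.Eventually.of_forall key)
      _ = a ^ (-(2 * p)) * ∫ s : ℝ, ((1 : ℝ) + (a⁻¹ * s) ^ 2) ^ (-p) := integral_const_mul _ _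
      _ = a ^ (-(2 * p)) * (|a⁻¹⁻¹| • ∫ u : ℝ, ((1 : ℝ) + u ^ 2) ^ (-p)) := by
          rw [MeasureTheory.Measure.integral_comp_mul_left
            (fun u : ℝ => ((1 : ℝ) + u ^ 2) ^ (-p)) a⁻¹]
      _ = a ^ (1 - 2 * p) * ∫ u : ℝ, ((1 : ℝ) + u ^ 2) ^ (-p) := by
          rw [inv_inv, abs_of_pos ha, smul_eq_mul, ← mul_assoc]
          congr 1
          rw [show (1 : ℝ) - 2 * p = -(2 * p) + 1 by ring, Real.rpow_add ha, Real.rpow_one]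

lemma outer (n : ℕ) (q : ℝ) (hq : (2 * n : ℝ) < 2 * q) {k : ℝ} (hk : 0 < k) :
    Integrable fun w : Fin n → ℂ => (k + (1 / 4) * nsq w) ^ (-q) := by
  set c : ℝ := min k (1 / 4) / 2 with hc
  have hc0 : 0 < c := by positivity
  have hfr : (Module.finrank ℝ (Fin n → ℂ) : ℝ) = 2 * n := by
    have h : Module.finrank ℝ (Fin n → ℂ) = n * 2 := by
      simp [Module.finrank_pi_fintype, Complex.finrank_real_complex, Finset.sum_const]
    rw [h]; push_cast; ring
  have hint : Integrable fun w : Fin n → ℂ => c ^ (-q) * (1 + ‖w‖) ^ (-(2 * q)) := by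
    exact (integrable_one_add_norm (by rw [hfr]; exact hq)).const_mul _
  refine hint.mono' ?_ (Filter.Eventually.of_forall fun w => ?_)
  · exact ((continuous_const.add (continuous_const.mul continuous_nsq)).rpow_const
      (fun w => Or.inl (by have := nsq_nonneg w; show k + (1 / 4) * nsq w ≠ 0; positivity))).aestronglyMeasurable
  · have hb : c * (1 + ‖w‖) ^ 2 ≤ k + (1 / 4) * nsq w := by
      have h1 : ‖w‖ ^ 2 ≤ nsq w := norm_sq_le_nsq w
      have h2 : 0 ≤ ‖w‖ := norm_nonneg w
      have h3 : min k (1 / 4) ≤ k := min_le_left _ _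
      have h4 : min k (1 / 4) ≤ 1 / 4 := min_le_right _ _
      have h5 : 0 < min k (1 / 4) := lt_min hk (by norm_num)
      rw [hc]
      nlinarith [sq_nonneg (‖w‖ - 1)]
    rw [Real.norm_of_nonneg (Real.rpow_nonneg (by have := nsq_nonneg w; positivity) _)]
    calc (k + (1 / 4) * nsq w) ^ (-q) ≤ (c * (1 + ‖w‖) ^ 2) ^ (-q) :=
          Real.rpow_le_rpow_of_nonpos (by positivity) hb (by nlinarith)
      _ = c ^ (-q) * (1 + ‖w‖) ^ (-(2 * q)) := by
          rw [Real.mul_rpow hc0.le (by positivity), ← Real.rpow_natCast (1 + ‖w‖) 2,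
            ← Real.rpow_mul (by positivity)]
          norm_num

lemma centered (n : ℕ) (p : ℝ) (hp : 1 < p) (hq : (2 * n : ℝ) < 2 * (2 * p - 1)) {k : ℝ}
    (hk : 0 < k) :
    Integrable (fun ws : (Fin n → ℂ) × ℝ =>
      ((k + (1 / 4) * nsq ws.1) ^ 2 + ws.2 ^ 2) ^ (-p)) := by
  have ha : ∀ w : Fin n → ℂ, 0 < k + (1 / 4) * nsq w := fun w => by
    have := nsq_nonneg w; positivity
  have hcont : Continuous fun ws : (Fin n → ℂ) × ℝ =>
      ((k + (1 / 4) * nsq ws.1) ^ 2 + ws.2 ^ 2) ^ (-p) := by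
    apply Continuous.rpow_const
    · exact ((continuous_const.add (continuous_const.mul
        (continuous_nsq.comp continuous_fst))).pow 2).add (continuous_snd.pow 2)
    · intro ws; left
      have h1 := ha ws.1
      positivity
  have hmeas : AEStronglyMeasurable (fun ws : (Fin n → ℂ) × ℝ =>
      ((k + (1 / 4) * nsq ws.1) ^ 2 + ws.2 ^ 2) ^ (-p))
      ((volume : Measure (Fin n → ℂ)).prod volume) := hcont.aestronglyMeasurable
  rw [MeasureTheory.Measure.volume_eq_prod]
  refine (integrable_prod_iff hmeas).mpr ⟨?_, ?_⟩
  · exact Filter.Eventually.of_forall fun w => (oneD p hp (ha w)).1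
  · have h2 : Integrable (fun w : Fin n → ℂ =>
        (k + (1 / 4) * nsq w) ^ (1 - 2 * p) * ∫ u : ℝ, ((1 : ℝ) + u ^ 2) ^ (-p)) := by
      have := (outer n (2 * p - 1) hq hk).mul_const (∫ u : ℝ, ((1 : ℝ) + u ^ 2) ^ (-p))
      simpa [neg_sub] using this
    refine h2.congr (Filter.Eventually.of_forall fun w => ?_)
    have hn : ∀ s : ℝ, ‖((k + (1 / 4) * nsq w) ^ 2 + s ^ 2) ^ (-p)‖
        = ((k + (1 / 4) * nsq w) ^ 2 + s ^ 2) ^ (-p) := fun s =>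
      Real.norm_of_nonneg (Real.rpow_nonneg (by have := ha w; positivity) _)
    simp_rw [hn]
    exact ((oneD p hp (ha w)).2).symm

/-- for 0 < α < (n+1)/2 and k > 0 the integral
    ∫_{ℍₙ} ((k + ¼|w−z|²)² + (s − t + ½Im(w·z̄))²)^{−(n+1−α)} dH_{2n+1}[w,s]
    is finite, and equals the corresponding integral centered at the origin. -/
theorem stmt6 (n : ℕ) (hn : 1 ≤ n) (α : ℝ) (hα₁ : 0 < α) (hα₂ : α < ((n : ℝ) + 1) / 2)
    (k : ℝ) (hk : 0 < k) (z : Fin n → ℂ) (t : ℝ) :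
    Integrable (fun ws : (Fin n → ℂ) × ℝ =>
        ((k + (1 / 4) * nsq (ws.1 - z)) ^ 2
            + (ws.2 - t + (1 / 2) * hIm ws.1 z) ^ 2) ^ (-((n : ℝ) + 1 - α))) ∧
    (∫ ws : (Fin n → ℂ) × ℝ,
        ((k + (1 / 4) * nsq (ws.1 - z)) ^ 2
            + (ws.2 - t + (1 / 2) * hIm ws.1 z) ^ 2) ^ (-((n : ℝ) + 1 - α)))
      = ∫ ws : (Fin n → ℂ) × ℝ,
          ((k + (1 / 4) * nsq ws.1) ^ 2 + ws.2 ^ 2) ^ (-((n : ℝ) + 1 - α)) := by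
  have hn' : (1 : ℝ) ≤ n := by exact_mod_cast hn
  set p : ℝ := (n : ℝ) + 1 - α with hpdef
  have hp : 1 < p := by rw [hpdef]; linarith
  have hq : (2 * (n : ℝ)) < 2 * (2 * p - 1) := by rw [hpdef]; linarith
  have hF0 : Integrable (fun ws : (Fin n → ℂ) × ℝ =>
      ((k + (1 / 4) * nsq ws.1) ^ 2 + ws.2 ^ 2) ^ (-p)) := centered n p hp hq hk
  have hconthIm : Continuous fun w : Fin n → ℂ => hIm w z := by
    apply continuous_finset_sum
    intro i _
    exact Complex.continuous_im.comp ((continuous_apply i).mul continuous_const)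
  have hTmp : MeasurePreserving
      (fun ws : (Fin n → ℂ) × ℝ => (ws.1 + z, ws.2 + t - (1 / 2) * hIm ws.1 z))
      volume volume := by
    rw [MeasureTheory.Measure.volume_eq_prod]
    have h1 : MeasurePreserving (fun w : Fin n → ℂ => w + z) volume volume :=
      measurePreserving_add_right volume z
    have hgm : Measurable (Function.uncurry fun (w : Fin n → ℂ) (s : ℝ) =>
        s + t - (1 / 2) * hIm w z) := by
      exact ((measurable_snd.add measurable_const).sub
        (measurable_const.mul (hconthIm.measurable.comp measurable_fst)))
    exact h1.skew_product hgm (Filter.Eventually.of_forall fun w => by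
      have h2 : (fun s : ℝ => s + t - (1 / 2) * hIm w z)
          = fun s : ℝ => s + (t - (1 / 2) * hIm w z) := by funext s; ring
      rw [h2]
      exact map_add_right_eq_self volume _)
  have hTme : MeasurableEmbedding
      (fun ws : (Fin n → ℂ) × ℝ => (ws.1 + z, ws.2 + t - (1 / 2) * hIm ws.1 z)) := by
    exact MeasurableEquiv.measurableEmbedding
      { toFun := fun ws : (Fin n → ℂ) × ℝ => (ws.1 + z, ws.2 + t - (1 / 2) * hIm ws.1 z)
        invFun := fun ws : (Fin n → ℂ) × ℝ =>
          (ws.1 - z, ws.2 - t + (1 / 2) * hIm (ws.1 - z) z)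
        left_inv := fun ws => by
          have h1 : ws.1 + z - z = ws.1 := add_sub_cancel_right ws.1 z
          refine Prod.ext h1 ?_
          show ws.2 + t - (1 / 2) * hIm ws.1 z - t + (1 / 2) * hIm (ws.1 + z - z) z = ws.2
          rw [h1]; ring
        right_inv := fun ws => by
          have h1 : ws.1 - z + z = ws.1 := sub_add_cancel ws.1 z
          refine Prod.ext h1 ?_
          show ws.2 - t + (1 / 2) * hIm (ws.1 - z) z + t - (1 / 2) * hIm (ws.1 - z) z = ws.2
          ring
        measurable_toFun := hTmp.measurable
        measurable_invFun := by
          exact ((continuous_fst.sub continuous_const).prodMk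
            ((continuous_snd.sub continuous_const).add (continuous_const.mul
              (hconthIm.comp (continuous_fst.sub continuous_const))))).measurable }
  have hImadd : ∀ w : Fin n → ℂ, hIm (w + z) z = hIm w z + hIm z z := by
    intro w
    simp only [hIm, Pi.add_apply, add_mul, Complex.add_im, Finset.sum_add_distrib]
  have hImself : hIm z z = 0 := by
    simp [hIm, Complex.mul_conj]
  have hcomp : ∀ ws : (Fin n → ℂ) × ℝ,
      ((k + (1 / 4) * nsq ((ws.1 + z) - z)) ^ 2
        + ((ws.2 + t - (1 / 2) * hIm ws.1 z) - t + (1 / 2) * hIm (ws.1 + z) z) ^ 2) ^ (-p)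
      = ((k + (1 / 4) * nsq ws.1) ^ 2 + ws.2 ^ 2) ^ (-p) := by
    intro ws
    rw [add_sub_cancel_right, hImadd, hImself]
    congr 1
    ring
  have hmeasFtr : AEStronglyMeasurable (fun ws : (Fin n → ℂ) × ℝ =>
      ((k + (1 / 4) * nsq (ws.1 - z)) ^ 2
        + (ws.2 - t + (1 / 2) * hIm ws.1 z) ^ 2) ^ (-p)) volume := by
    apply Continuous.aestronglyMeasurable
    apply Continuous.rpow_const
    · exact ((continuous_const.add (continuous_const.mul
        (continuous_nsq.comp (continuous_fst.sub continuous_const)))).pow 2).add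
        (((continuous_snd.sub continuous_const).add
          (continuous_const.mul (hconthIm.comp continuous_fst))).pow 2)
    · intro ws; left
      have h1 := nsq_nonneg (ws.1 - z)
      positivity
  have hFtrT : ((fun ws : (Fin n → ℂ) × ℝ =>
        ((k + (1 / 4) * nsq (ws.1 - z)) ^ 2
          + (ws.2 - t + (1 / 2) * hIm ws.1 z) ^ 2) ^ (-p))
      ∘ (fun ws : (Fin n → ℂ) × ℝ => (ws.1 + z, ws.2 + t - (1 / 2) * hIm ws.1 z)))
      = fun ws : (Fin n → ℂ) × ℝ =>
        ((k + (1 / 4) * nsq ws.1) ^ 2 + ws.2 ^ 2) ^ (-p) := funext hcomp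
  constructor
  · exact (hTmp.integrable_comp hmeasFtr).mp (by rw [hFtrT]; exact hF0)
  · have h := hTmp.integral_comp hTme (fun ws : (Fin n → ℂ) × ℝ =>
      ((k + (1 / 4) * nsq (ws.1 - z)) ^ 2
        + (ws.2 - t + (1 / 2) * hIm ws.1 z) ^ 2) ^ (-p))
    calc (∫ ws : (Fin n → ℂ) × ℝ,
          ((k + (1 / 4) * nsq (ws.1 - z)) ^ 2
            + (ws.2 - t + (1 / 2) * hIm ws.1 z) ^ 2) ^ (-p))
        = ∫ ws : (Fin n → ℂ) × ℝ,
            ((k + (1 / 4) * nsq ((ws.1 + z) - z)) ^ 2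
              + ((ws.2 + t - (1 / 2) * hIm ws.1 z) - t + (1 / 2) * hIm (ws.1 + z) z) ^ 2)
              ^ (-p) := h.symm
      _ = ∫ ws : (Fin n → ℂ) × ℝ, ((k + (1 / 4) * nsq ws.1) ^ 2 + ws.2 ^ 2) ^ (-p) :=
        integral_congr_ae (Filter.Eventually.of_forall hcomp)
end
end

section
/- Let n ≥ 1 and γ > 1. The admissible region Γ_γ(ω) = {ζ ∈ 𝒰 : |(ζ_{n+1} − ω̄_{n+1})/(2i) − ¼ζ'·ω̄'| < γ(Im ζ_{n+1} − ¼|ζ'|²)} centered at a boundary point ω = Ψ⁻¹[w,s] coincides, in parametrized coordinates, with the set Ψ⁻¹{[z,t,h] ∈ ℍₙ × (0,∞) : d([z,t,h],[w,s]) < (2γh)^{1/2}}. -/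
open MeasureTheory Complex

noncomputable section

/-- Defining function ρ(ζ) = Im ζ_{n+1} − ¼|ζ'|². -/
def rho {n : ℕ} (ζ : (Fin n → ℂ) × ℂ) : ℝ := ζ.2.im - nsq ζ.1 / 4

/-- Parametrized gauge d([z,t,h],[w,s]) = d([[z,t]·[w,s]⁻¹, 4h]), where
    d([z,t,h]) = ((1/16)(|z|²+h)² + t²)^{1/4}. -/
def dParam {n : ℕ} (z : Fin n → ℂ) (t h : ℝ) (w : Fin n → ℂ) (s : ℝ) : ℝ :=
  ((1 / 16) * (nsq (z - w) + 4 * h) ^ 2 + (t - s + (1 / 2) * hIm z w) ^ 2) ^ ((1 : ℝ) / 4)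

lemma nsq_sub_eq {n : ℕ} (z w : Fin n → ℂ) :
    nsq (z - w) = nsq z + nsq w - 2 * (∑ i, z i * (starRingEnd ℂ) (w i)).re := by
  simp only [nsq, Complex.sq_norm, Complex.re_sum, ← Finset.sum_sub_distrib,
    ← Finset.sum_add_distrib, Finset.mul_sum]
  refine Finset.sum_congr rfl fun i _ => ?_
  simpa using Complex.normSq_sub (z i) (w i)

/-- the admissible region Γ_γ(ω) centered at the boundary point
    ω = Ψ⁻¹[w,s] coincides, in parametrized coordinates, with
    {[z,t,h] ∈ ℍₙ × (0,∞) : d([z,t,h],[w,s]) < (2γh)^{1/2}}. -/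
theorem stmt18 (n : ℕ) (hn : 1 ≤ n) (γ : ℝ) (hγ : 1 < γ) (w : Fin n → ℂ) (s : ℝ) :
    {ζ : (Fin n → ℂ) × ℂ | 0 < rho ζ ∧
        ‖(ζ.2 - (starRingEnd ℂ) ((s : ℂ) + Complex.I * (nsq w : ℂ) / 4))
              / (2 * Complex.I)
            - (1 / 4) * ∑ i, ζ.1 i * (starRingEnd ℂ) (w i)‖ < γ * rho ζ}
      = {ζ : (Fin n → ℂ) × ℂ | 0 < rho ζ ∧
          dParam ζ.1 ζ.2.re (rho ζ) w s < Real.sqrt (2 * γ * rho ζ)} := by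
  ext ζ
  simp only [Set.mem_setOf_eq]
  refine and_congr_right fun hρ => ?_
  set h := rho ζ with hh
  set S : ℂ := ∑ i, ζ.1 i * (starRingEnd ℂ) (w i) with hS
  set A : ℂ := (ζ.2 - (starRingEnd ℂ) ((s : ℂ) + Complex.I * (nsq w : ℂ) / 4))
      / (2 * Complex.I) - (1 / 4) * S with hA
  have hγh : 0 < γ * h := mul_pos (lt_trans one_pos hγ) hρ
  have hAre : A.re = ζ.2.im / 2 + nsq w / 8 - S.re / 4 := by
    simp [hA, Complex.div_re, Complex.normSq, Complex.div_im]
    ring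
  have hAim : A.im = -(ζ.2.re) / 2 + s / 2 - S.im / 4 := by
    simp [hA, Complex.div_re, Complex.normSq, Complex.div_im]
    ring
  have him : ζ.2.im = h + nsq ζ.1 / 4 := by simp [hh, rho]
  have hB : (1 / 16) * (nsq (ζ.1 - w) + 4 * h) ^ 2
      + (ζ.2.re - s + (1 / 2) * hIm ζ.1 w) ^ 2 = 4 * Complex.normSq A := by
    have hIm_eq : hIm ζ.1 w = S.im := by simp [hIm, hS]
    rw [nsq_sub_eq, Complex.normSq_apply, hAre, hAim, hIm_eq, him]
    ring
  have hBnn : (0:ℝ) ≤ (1 / 16) * (nsq (ζ.1 - w) + 4 * h) ^ 2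
      + (ζ.2.re - s + (1 / 2) * hIm ζ.1 w) ^ 2 := by positivity
  have hsqrt : Real.sqrt (2 * γ * h) = ((2 * γ * h) ^ 2) ^ ((1:ℝ)/4) := by
    rw [← Real.rpow_natCast (2 * γ * h) 2, ← Real.rpow_mul (by nlinarith)]
    norm_num [Real.sqrt_eq_rpow]
  rw [dParam, hsqrt, Real.rpow_lt_rpow_iff hBnn (by positivity) (by norm_num), hB]
  rw [show ‖A‖ = Real.sqrt (Complex.normSq A) from Complex.norm_def A]
  rw [show γ * h = Real.sqrt ((γ * h) ^ 2) from (Real.sqrt_sq hγh.le).symm]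
  rw [Real.sqrt_lt_sqrt_iff (Complex.normSq_nonneg A)]
  constructor <;> intro hlt <;> nlinarith [Complex.normSq_nonneg A]
end
end
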